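/- Let {B(x_i, r_i)}_{i=1}^∞ be a countable collection of closed Euclidean balls in ℝ^d (with centres x_i ∈ ℝ^d and radii r_i > 0). Assume (1) the collection is shrinking locally, and (2) Lebesgue-almost every point of ℝ^d belongs to limsup B(x_i, r_i), i.e. almost every α ∈ ℝ^d lies in infinitely many of the balls B(x_i, r_i). Then the set Bad({B(x_i, r_i)}) of badly approximable points with respect to {B(x_i, r_i)} has d-dimensional Lebesgue measure zero. -/

import Mathlib

open MeasureTheory Metric Set Filter ENNReal

private lemma key_null (d : ℕ) (x : ℕ → EuclideanSpace ℝ (Fin d)) (r : ℕ → ℝ)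
    (hr : ∀ i, 0 < r i)
    (hshrink : ∀ (y : EuclideanSpace ℝ (Fin d)) (ρ : ℝ), 0 < ρ → ∀ ε > (0 : ℝ),
      {i : ℕ | (closedBall (x i) (r i) ∩ closedBall y ρ).Nonempty ∧ ε < r i}.Finite)
    (hae : ∀ᵐ α : EuclideanSpace ℝ (Fin d), ∀ n : ℕ, ∃ i ≥ n, α ∈ closedBall (x i) (r i))
    (κ : ℝ) (hκ0 : 0 < κ) (hκ1 : κ ≤ 1) (N : ℕ) :
    volume {α : EuclideanSpace ℝ (Fin d) | ∀ i ≥ N, α ∉ closedBall (x i) (κ * r i)} = 0 := by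
  set A : Set (EuclideanSpace ℝ (Fin d)) := {α : EuclideanSpace ℝ (Fin d) | ∀ i ≥ N, α ∉ closedBall (x i) (κ * r i)} with hA
  have hmeas : MeasurableSet A := by
    have : A = ⋂ i, ⋂ (_ : i ≥ N), (closedBall (x i) (κ * r i))ᶜ := by
      ext α; simp [hA]
    rw [this]
    exact MeasurableSet.iInter fun i => MeasurableSet.iInter fun _ =>
      measurableSet_closedBall.compl
  have hdens := Besicovitch.ae_tendsto_measure_inter_div_of_measurableSet
    (volume : Measure (EuclideanSpace ℝ (Fin d))) hmeas
  rw [measure_eq_zero_iff_ae_notMem]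
  filter_upwards [hae, hdens] with α hα hd
  intro hAα
  have hind : A.indicator (1 : EuclideanSpace ℝ (Fin d) → ℝ≥0∞) α = 1 := Set.indicator_of_mem hAα 1
  rw [hind] at hd
  -- choose a sequence of balls containing α with radii tending to 0
  have hex : ∀ n : ℕ, ∃ j, j ≥ N ∧ α ∈ closedBall (x j) (r j) ∧ r j ≤ 1 / (n + 1) := by
    intro n
    have hε : (0 : ℝ) < 1 / (n + 1) := by positivity
    obtain ⟨M, hM⟩ := (hshrink α 1 one_pos (1 / (n + 1)) hε).bddAbove
    obtain ⟨j, hjN, hjα⟩ := hα (max N (M + 1))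
    refine ⟨j, le_trans (le_max_left _ _) hjN, hjα, ?_⟩
    by_contra hcon
    push_neg at hcon
    have hjmem : j ∈ {i : ℕ | (closedBall (x i) (r i) ∩ closedBall α 1).Nonempty ∧
        1 / (n + 1 : ℝ) < r i} :=
      ⟨⟨α, hjα, mem_closedBall_self zero_le_one⟩, hcon⟩
    have := hM hjmem
    omega
  choose j hjN hjball hjr using hex
  set ρ : ℕ → ℝ := fun n => 2 * r (j n) with hρ
  have hρpos : ∀ n, 0 < ρ n := fun n => by
    have := hr (j n); simp only [hρ]; linarith
  have hρ0 : Tendsto ρ atTop (nhds 0) := by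
    have h1 : Tendsto (fun n : ℕ => 2 * (1 / (n + 1 : ℝ))) atTop (nhds 0) := by
      have := tendsto_one_div_add_atTop_nhds_zero_nat (𝕜 := ℝ)
      simpa using this.const_mul 2
    refine squeeze_zero (fun n => (hρpos n).le) (fun n => ?_) h1
    have := hjr n
    simp only [hρ]; linarith
  have hρ0' : Tendsto ρ atTop (nhdsWithin 0 (Set.Ioi 0)) :=
    tendsto_nhdsWithin_of_tendsto_nhds_of_eventually_within _ hρ0
      (Filter.Eventually.of_forall fun n => hρpos n)
  have hg := hd.comp hρ0'
  -- bound the density ratios away from 1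
  set e : ℝ≥0∞ := ENNReal.ofReal ((κ / 2) ^ d) with he
  have hepos : 0 < e := by
    rw [he]; exact ENNReal.ofReal_pos.2 (by positivity)
  have hbound : ∀ n, volume (A ∩ closedBall α (ρ n)) / volume (closedBall α (ρ n)) ≤ 1 - e := by
    intro n
    set B : Set (EuclideanSpace ℝ (Fin d)) := closedBall α (ρ n)
    set B' : Set (EuclideanSpace ℝ (Fin d)) := closedBall (x (j n)) (κ * r (j n))
    have hrn := hr (j n)
    have hB'B : B' ⊆ B := by
      intro y hy
      have hdy : dist y (x (j n)) ≤ κ * r (j n) := mem_closedBall.1 hy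
      have hdα : dist α (x (j n)) ≤ r (j n) := mem_closedBall.1 (hjball n)
      have : dist y α ≤ dist y (x (j n)) + dist (x (j n)) α := dist_triangle _ _ _
      rw [dist_comm (x (j n)) α] at this
      have : dist y α ≤ 2 * r (j n) := by nlinarith
      exact mem_closedBall.1 this |> fun h => mem_closedBall.2 (by simpa [hρ] using h)
    have hBvol : volume B = ENNReal.ofReal ((ρ n) ^ d) * volume (ball (0 : EuclideanSpace ℝ (Fin d)) 1) := by
      have := Measure.addHaar_closedBall (volume : Measure (EuclideanSpace ℝ (Fin d))) α (hρpos n).le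
      simpa [finrank_euclideanSpace_fin] using this
    have hB'vol : volume B' = ENNReal.ofReal ((κ * r (j n)) ^ d) * volume (ball (0 : EuclideanSpace ℝ (Fin d)) 1) := by
      have := Measure.addHaar_closedBall (volume : Measure (EuclideanSpace ℝ (Fin d))) (x (j n))
        (by positivity : (0:ℝ) ≤ κ * r (j n))
      simpa [finrank_euclideanSpace_fin] using this
    have hB'eB : volume B' = e * volume B := by
      rw [hB'vol, hBvol, he, ← mul_assoc, ← ENNReal.ofReal_mul (by positivity)]
      congr 2
      rw [← mul_pow]
      congr 1
      simp only [hρ]; ring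
    have hBne : volume B ≠ 0 := (measure_closedBall_pos _ _ (hρpos n)).ne'
    have hBfin : volume B ≠ ⊤ := measure_closedBall_lt_top.ne
    rw [ENNReal.div_le_iff hBne hBfin]
    have hsub : (1 - e) * volume B = volume B - volume B' := by
      rw [hB'eB, ENNReal.sub_mul (fun _ _ => hBfin), one_mul]
    rw [hsub]
    have hdisj : A ∩ B ⊆ B \ B' := by
      intro y ⟨hyA, hyB⟩
      exact ⟨hyB, hyA (j n) (hjN n)⟩
    calc volume (A ∩ B) ≤ volume (B \ B') := measure_mono hdisj
      _ = volume B - volume B' := measure_diff hB'B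
          measurableSet_closedBall.nullMeasurableSet
          (lt_of_le_of_lt (measure_mono hB'B) measure_closedBall_lt_top).ne
  have hle : (1 : ℝ≥0∞) ≤ 1 - e := le_of_tendsto' hg hbound
  have : (1 : ℝ≥0∞) - e < 1 :=
    ENNReal.sub_lt_self ENNReal.one_ne_top one_ne_zero hepos.ne'
  exact absurd (lt_of_le_of_lt hle this) (lt_irrefl _)

theorem badly_approximable_measure_zero (d : ℕ)
    (x : ℕ → EuclideanSpace ℝ (Fin d)) (r : ℕ → ℝ) (hr : ∀ i, 0 < r i)
    (hshrink : ∀ (y : EuclideanSpace ℝ (Fin d)) (ρ : ℝ), 0 < ρ → ∀ ε > (0 : ℝ),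
      {i : ℕ | (closedBall (x i) (r i) ∩ closedBall y ρ).Nonempty ∧ ε < r i}.Finite)
    (hae : ∀ᵐ α : EuclideanSpace ℝ (Fin d), ∀ n : ℕ, ∃ i ≥ n, α ∈ closedBall (x i) (r i)) :
    volume {α : EuclideanSpace ℝ (Fin d) |
      ∃ κ > (0 : ℝ), ∃ N : ℕ, ∀ i ≥ N, α ∉ closedBall (x i) (κ * r i)} = 0 := by
  have hsub : {α : EuclideanSpace ℝ (Fin d) |
      ∃ κ > (0 : ℝ), ∃ N : ℕ, ∀ i ≥ N, α ∉ closedBall (x i) (κ * r i)} ⊆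
      ⋃ (m : ℕ) (N : ℕ), {α : EuclideanSpace ℝ (Fin d) |
        ∀ i ≥ N, α ∉ closedBall (x i) ((1 / (m + 1)) * r i)} := by
    rintro α ⟨κ, hκ0, N, hN⟩
    obtain ⟨m, hm⟩ := exists_nat_one_div_lt hκ0
    refine Set.mem_iUnion.2 ⟨m, Set.mem_iUnion.2 ⟨N, fun i hi hmem => ?_⟩⟩
    refine hN i hi (closedBall_subset_closedBall ?_ hmem)
    have := (hr i).le
    have : (1 / (m + 1 : ℝ)) ≤ κ := hm.le
    nlinarith [(hr i).le]
  refine measure_mono_null hsub ?_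
  refine measure_iUnion_null fun m => measure_iUnion_null fun N => ?_
  have h0 : (0 : ℝ) < 1 / (m + 1) := by positivity
  have h1 : (1 : ℝ) / (m + 1) ≤ 1 := by
    rw [div_le_one (by positivity)]; linarith [(Nat.cast_nonneg m : (0:ℝ) ≤ m)]
  exact key_null d x r hr hshrink hae _ h0 h1 N
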